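/- Let ρ be a real number with 0 < ρ < 1 and ρ·log(ρ) + (1 − ρ)/2 > 0. Then the function h : ℝ → ℝ defined by h(τ) = ρ^(τ+1) + τ/2 − ρ − τ·ρ/2 (real powers) is strictly monotone increasing on [0, ∞). -/

import Mathlib

/-- For `0 < ρ < 1` with `ρ·log ρ + (1-ρ)/2 > 0`, the function
`h(τ) = ρ^(τ+1) + τ/2 - ρ - τρ/2` (real powers) is strictly monotone
increasing on `[0, ∞)`. -/
theorem stmt_8 (ρ : ℝ) (hρ0 : 0 < ρ) (hρ1 : ρ < 1)
    (hcond : ρ * Real.log ρ + (1 - ρ) / 2 > 0) :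
    StrictMonoOn (fun τ : ℝ => ρ ^ (τ + 1) + τ / 2 - ρ - τ * ρ / 2)
      (Set.Ici (0 : ℝ)) := by
  have hderiv : ∀ τ : ℝ, HasDerivAt (fun τ : ℝ => ρ ^ (τ + 1) + τ / 2 - ρ - τ * ρ / 2)
      (ρ ^ (τ + 1) * Real.log ρ + 1 / 2 - 0 - ρ / 2) τ := by
    intro τ
    have h1 : HasDerivAt (fun τ : ℝ => ρ ^ (τ + 1)) (ρ ^ (τ + 1) * Real.log ρ * 1) τ := by
      have := (Real.hasStrictDerivAt_const_rpow hρ0 (τ + 1)).hasDerivAt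
      exact this.comp τ ((hasDerivAt_id τ).add_const 1)
    have h2 : HasDerivAt (fun τ : ℝ => τ / 2) (1 / 2) τ := by
      simpa using (hasDerivAt_id τ).div_const 2
    have h3 : HasDerivAt (fun τ : ℝ => τ * ρ / 2) (ρ / 2) τ := by
      have : HasDerivAt (fun τ : ℝ => τ * ρ) ρ τ := by
        simpa using (hasDerivAt_id τ).mul_const ρ
      simpa using this.div_const 2
    exact (((h1.add h2).sub_const ρ).sub h3).congr_deriv (by ring)
  apply strictMonoOn_of_hasDerivWithinAt_pos (convex_Ici 0)
    (fun τ _ => (hderiv τ).continuousAt.continuousWithinAt)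
    (fun τ hτ => ((hderiv τ).hasDerivWithinAt))
  intro τ hτ
  rw [interior_Ici] at hτ
  have hτ0 : (0:ℝ) < τ := hτ
  have hlog : Real.log ρ < 0 := Real.log_neg hρ0 hρ1
  have hle : ρ ^ (τ + 1) ≤ ρ ^ (1:ℝ) :=
    Real.rpow_le_rpow_of_exponent_ge hρ0 hρ1.le (by linarith)
  rw [Real.rpow_one] at hle
  have : ρ * Real.log ρ ≤ ρ ^ (τ + 1) * Real.log ρ := by
    nlinarith
  nlinarith
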